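/- Let W, V, T be finite-dimensional real vector spaces in a short exact sequence 0 → V → W → T → 0 with n = dim T, and let ω be a multilagrangian (k+1)-form on W of rank N and horizontality degree k+1−r (1 ≤ r ≤ k+1, k+1−r ≤ n) with multilagrangian subspace L. Then there exists a k-isotropic subspace F of W with W = F ⊕ L such that E := V ∩ F is an (r−1)-isotropic subspace of V and V = E ⊕ L. -/

import Mathlib

open Module


section Aux

variable {W : Type*} [AddCommGroup W] [Module ℝ W]

/-- Move coordinate `j` of an alternating map to the front. -/
lemma alt_moveFront {n : ℕ} (ω : W [⋀^Fin (n+1)]→ₗ[ℝ] ℝ) (X : Fin (n+1) → W)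
    (j : Fin (n+1)) (h : ω (Fin.cons (X j) (X ∘ j.succAbove)) = 0) : ω X = 0 := by
  classical
  set g : Fin (n+1) → W := Fin.cons (X j) (X ∘ j.succAbove) with hg
  set τ : Equiv.Perm (Fin (n+1)) := (finSuccEquiv' j).trans (finSuccEquiv n).symm with hτ
  have hX : X = g ∘ τ := by
    funext i
    rcases eq_or_ne i j with rfl | hne
    · simp [hτ, hg, finSuccEquiv'_at]
    · obtain ⟨i', rfl⟩ := Fin.exists_succAbove_eq hne
      simp [hτ, hg, finSuccEquiv'_succAbove]
  rw [hX, ω.map_perm, h, smul_zero]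

/-- Positional version of a "contraction with `w'` vanishes" hypothesis. -/
lemma alt_key' {n : ℕ} (ω : W [⋀^Fin (n+1)]→ₗ[ℝ] ℝ) (S : Submodule ℝ W) (w' : W) (c : ℕ)
    (hkey : ∀ (g : Fin n → W) (J : Finset (Fin n)), J.card = c → (∀ i ∈ J, g i ∈ S) →
      ω (Fin.cons w' g) = 0) :
    ∀ (X : Fin (n+1) → W) (j : Fin (n+1)) (I : Finset (Fin (n+1))),
      X j = w' → I.card = c → j ∉ I → (∀ i ∈ I, X i ∈ S) → ω X = 0 := by
  classical
  intro X j I hXj hI hjI hmem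
  apply alt_moveFront ω X j
  rw [hXj]
  set J : Finset (Fin n) := Finset.univ.filter (fun i' => j.succAbove i' ∈ I) with hJ
  have himg : J.image j.succAbove = I := by
    ext i
    simp only [hJ, Finset.mem_image, Finset.mem_filter, Finset.mem_univ, true_and]
    constructor
    · rintro ⟨i', hi', rfl⟩; exact hi'
    · intro hi
      obtain ⟨i', rfl⟩ := Fin.exists_succAbove_eq (fun h : i = j => hjI (h ▸ hi))
      exact ⟨i', hi, rfl⟩
  have hJcard : J.card = c := by
    have := Finset.card_image_of_injective J (Fin.succAbove_right_injective (p := j))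
    rw [himg, hI] at this; omega
  exact hkey _ J hJcard (fun i' hi' => hmem _ (by rw [← himg]; exact Finset.mem_image_of_mem _ hi'))

end Aux

section Aux2
variable {W : Type*} [AddCommGroup W] [Module ℝ W]

/-- If `S` satisfies a `(c+1)`-isotropy condition and contraction with `w'` vanishes on
`c`-tuples in `S`, then `S ⊔ span {w'}` satisfies the `(c+1)`-isotropy condition. -/
lemma alt_ext {n : ℕ} (ω : W [⋀^Fin (n+1)]→ₗ[ℝ] ℝ) (S : Submodule ℝ W) (w' : W) (c : ℕ)
    (hS : ∀ (x : Fin (n+1) → W) (I : Finset (Fin (n+1))), I.card = c + 1 →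
      (∀ i ∈ I, x i ∈ S) → ω x = 0)
    (hkey : ∀ (X : Fin (n+1) → W) (j : Fin (n+1)) (I : Finset (Fin (n+1))),
      X j = w' → I.card = c → j ∉ I → (∀ i ∈ I, X i ∈ S) → ω X = 0)
    (x : Fin (n+1) → W) (I : Finset (Fin (n+1))) (hI : I.card = c + 1)
    (hx : ∀ i ∈ I, x i ∈ S ⊔ (Submodule.span ℝ {w'})) : ω x = 0 := by
  classical
  have hdecomp : ∀ i : Fin (n+1), ∃ (e : W) (t : ℝ),
      (i ∈ I → e ∈ S ∧ x i = e + t • w') ∧ (i ∉ I → e = x i ∧ t = 0) := by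
    intro i
    by_cases hi : i ∈ I
    · obtain ⟨e, he, c', hc', hec⟩ := Submodule.mem_sup.1 (hx i hi)
      obtain ⟨t, rfl⟩ := Submodule.mem_span_singleton.1 hc'
      exact ⟨e, t, fun _ => ⟨he, hec.symm⟩, fun h => absurd hi h⟩
    · exact ⟨x i, 0, fun h => absurd h hi, fun _ => ⟨rfl, rfl⟩⟩
  choose e t he using hdecomp
  set z : Fin (n+1) → W := fun i => t i • w' with hz
  have hxe : x = e + z := by
    funext i
    by_cases hi : i ∈ I
    · exact ((he i).1 hi).2
    · obtain ⟨h1, h2⟩ := (he i).2 hi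
      simp [hz, h2, ← h1]
  have expand := ω.toMultilinearMap.map_add_univ e z
  have : ω x = ∑ s : Finset (Fin (n+1)), ω (s.piecewise e z) := by
    rw [hxe]; exact expand
  rw [this]
  apply Finset.sum_eq_zero
  intro s _
  set P : Fin (n+1) → W := s.piecewise e z with hP
  by_cases hcompl : ∀ i, i ∉ s → i ∈ I
  · -- every coordinate outside `s` is in `I`
    have hKsub : I \ s ⊆ I := Finset.sdiff_subset
    rcases Nat.lt_or_ge (I \ s).card 2 with hlt | hge
    · rcases Nat.lt_or_ge (I \ s).card 1 with h0 | h1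
      · -- I ⊆ s : all coordinates of I are in S
        have hIs : I ⊆ s := by
          intro i hi
          by_contra hns
          exact absurd (Finset.card_pos.2 ⟨i, Finset.mem_sdiff.2 ⟨hi, hns⟩⟩) (by omega)
        apply hS P I hI
        intro i hi
        have : P i = e i := Finset.piecewise_eq_of_mem _ _ _ (hIs hi)
        rw [this]; exact ((he i).1 hi).1
      · -- exactly one coordinate j of I outside s
        have hcard1 : (I \ s).card = 1 := by omega
        obtain ⟨j, hj⟩ := Finset.card_eq_one.1 hcard1
        have hjI : j ∈ I := hKsub (hj ▸ Finset.mem_singleton_self j)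
        have hjs : j ∉ s := (Finset.mem_sdiff.1 (hj ▸ Finset.mem_singleton_self j)).2
        have hPj : P j = t j • w' := Finset.piecewise_eq_of_notMem _ _ _ hjs
        have hup : P = Function.update P j (t j • w') := by
          rw [← hPj, Function.update_eq_self]
        rw [hup, ω.map_update_smul]
        have : ω (Function.update P j w') = 0 := by
          apply hkey _ j (I.erase j) (Function.update_self j w' P)
          · rw [Finset.card_erase_of_mem hjI, hI]; omega
          · exact Finset.notMem_erase j I
          · intro i hi
            have hiI : i ∈ I := Finset.mem_of_mem_erase hi
            have hij : i ≠ j := Finset.ne_of_mem_erase hi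
            have his : i ∈ s := by
              by_contra hns
              exact hij (by
                have : i ∈ I \ s := Finset.mem_sdiff.2 ⟨hiI, hns⟩
                rw [hj] at this; exact Finset.mem_singleton.1 this)
            rw [Function.update_of_ne hij, hP, Finset.piecewise_eq_of_mem _ _ _ his]
            exact ((he i).1 hiI).1
        rw [this, smul_zero]
    · -- at least two coordinates of I outside s : two proportional arguments
      obtain ⟨j₁, hj₁, j₂, hj₂, hne⟩ := Finset.one_lt_card.1 hge
      have hj₁s : j₁ ∉ s := (Finset.mem_sdiff.1 hj₁).2
      have hj₂s : j₂ ∉ s := (Finset.mem_sdiff.1 hj₂).2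
      have hPj₁ : P j₁ = t j₁ • w' := Finset.piecewise_eq_of_notMem _ _ _ hj₁s
      have hPj₂ : P j₂ = t j₂ • w' := Finset.piecewise_eq_of_notMem _ _ _ hj₂s
      have hup : P = Function.update (Function.update P j₁ (t j₁ • w')) j₂ (t j₂ • w') := by
        rw [← hPj₁, ← hPj₂, Function.update_eq_self]
        exact (Function.update_eq_self _ _).symm
      rw [hup, ω.map_update_smul, Function.update_comm hne, ω.map_update_smul]
      have : ω (Function.update (Function.update P j₂ w') j₁ w') = 0 := by
        apply ω.map_eq_zero_of_eq _ _ hne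
        rw [Function.update_self, Function.update_of_ne hne.symm, Function.update_self]
      rw [this, smul_zero, smul_zero]
  · push_neg at hcompl
    obtain ⟨i, his, hiI⟩ := hcompl
    apply ω.map_coord_zero i
    have : P i = t i • w' := Finset.piecewise_eq_of_notMem _ _ _ his
    rw [this, ((he i).2 hiI).2, zero_smul]

end Aux2

section Aux3
variable {W : Type*} [AddCommGroup W] [Module ℝ W]

lemma disj_ext (S L : Submodule ℝ W) (w' : W) (hSL : Disjoint S L) (hw' : w' ∉ S ⊔ L) :
    Disjoint (S ⊔ Submodule.span ℝ {w'}) L := by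
  rw [Submodule.disjoint_def]
  intro x hxE' hxL
  obtain ⟨y, hyS, z, hz, rfl⟩ := Submodule.mem_sup.1 hxE'
  obtain ⟨t, rfl⟩ := Submodule.mem_span_singleton.1 hz
  rcases eq_or_ne t 0 with rfl | ht
  · rw [zero_smul, add_zero] at hxL ⊢
    exact Submodule.disjoint_def.1 hSL y hyS hxL
  · exfalso
    apply hw'
    have h1 : y + t • w' ∈ S ⊔ L := Submodule.mem_sup_right hxL
    have h2 : y ∈ S ⊔ L := Submodule.mem_sup_left hyS
    have h3 : t • w' ∈ S ⊔ L := by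
      have := Submodule.sub_mem _ h1 h2; simpa using this
    have := Submodule.smul_mem _ t⁻¹ h3
    rwa [smul_smul, inv_mul_cancel₀ ht, one_smul] at this
end Aux3

section Aux4
variable {W : Type*} [AddCommGroup W] [Module ℝ W]

lemma phase1_step {r' m : ℕ} (ω : W [⋀^Fin (r'+m+1)]→ₗ[ℝ] ℝ) (V L : Submodule ℝ W)
    (hhor : ∀ (x : Fin (r'+m+1) → W) (I : Finset (Fin (r'+m+1))), I.card = r'+2 →
      (∀ i ∈ I, x i ∈ V) → ω x = 0)
    (hml' : ∀ α : W [⋀^Fin (r'+m)]→ₗ[ℝ] ℝ,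
      (∀ (x : Fin (r'+m) → W) (i : Fin (r'+m)), x i ∈ L → α x = 0) →
      (∀ (x : Fin (r'+m) → W) (I : Finset (Fin (r'+m))), I.card = r'+1 →
        (∀ i ∈ I, x i ∈ V) → α x = 0) →
      ∃ v ∈ L, ∀ x : Fin (r'+m) → W, ω (Fin.cons v x) = α x)
    (hLV : L ≤ V) (E : Submodule ℝ W) (hEV : E ≤ V) (hEL : Disjoint E L)
    (hiso : ∀ (x : Fin (r'+m+1) → W) (I : Finset (Fin (r'+m+1))), I.card = r'+1 →
      (∀ i ∈ I, x i ∈ E) → ω x = 0)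
    (hne : E ⊔ L ≠ V) :
    ∃ E' : Submodule ℝ W, E < E' ∧ E' ≤ V ∧ Disjoint E' L ∧
      ∀ (x : Fin (r'+m+1) → W) (I : Finset (Fin (r'+m+1))), I.card = r'+1 →
        (∀ i ∈ I, x i ∈ E') → ω x = 0 := by
  classical
  have hELV : E ⊔ L ≤ V := sup_le hEV hLV
  obtain ⟨w, hwV, hwEL⟩ := SetLike.exists_of_lt (lt_of_le_of_ne hELV hne)
  -- a relative complement `G` of `E ⊔ L` inside `V`
  obtain ⟨G₀, hG₀⟩ := Submodule.exists_isCompl ((E ⊔ L).comap V.subtype)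
  set G : Submodule ℝ W := G₀.map V.subtype with hGdef
  have hGV : G ≤ V := Submodule.map_subtype_le V G₀
  have hsupG : (E ⊔ L) ⊔ G = V := by
    have h := congrArg (Submodule.map V.subtype) hG₀.sup_eq_top
    rwa [Submodule.map_sup, Submodule.map_comap_subtype, inf_eq_right.mpr hELV,
      Submodule.map_subtype_top] at h
  have hGdisj : ∀ x, x ∈ E ⊔ L → x ∈ G → x = 0 := by
    intro x hx hxG
    obtain ⟨y, hy, rfl⟩ := Submodule.mem_map.1 hxG
    have hy2 : y ∈ (E ⊔ L).comap V.subtype ⊓ G₀ := ⟨hx, hy⟩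
    rw [hG₀.inf_eq_bot] at hy2
    have hy0 : y = 0 := (Submodule.mem_bot ℝ).1 hy2
    simp [hy0]
  set D : Submodule ℝ W := E ⊔ G with hDdef
  have hED : E ≤ D := le_sup_left
  have hDV : D ≤ V := sup_le hEV hGV
  have hDL : ∀ x, x ∈ D → x ∈ L → x = 0 := by
    intro x hxD hxL
    obtain ⟨e, heE, g, hgG, rfl⟩ := Submodule.mem_sup.1 hxD
    have hg0 : g = 0 := by
      apply hGdisj g _ hgG
      have hx : e + g ∈ E ⊔ L := Submodule.mem_sup_right hxL
      have he' : e ∈ E ⊔ L := Submodule.mem_sup_left heE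
      have := Submodule.sub_mem _ hx he'
      simpa using this
    rw [hg0, add_zero] at hxL ⊢
    exact Submodule.disjoint_def.1 hEL e heE hxL
  have hLD_sup : L ⊔ D = V := by
    rw [hDdef, ← sup_assoc, sup_comm L E]; exact hsupG
  obtain ⟨C, hC⟩ := Submodule.exists_isCompl V
  set M : Submodule ℝ W := D ⊔ C with hMdef
  have hLM : IsCompl L M := by
    constructor
    · rw [Submodule.disjoint_def]
      intro x hxL hxM
      obtain ⟨d, hd, c', hc', rfl⟩ := Submodule.mem_sup.1 hxM
      have hcV : c' ∈ V := by
        have h1 : d + c' ∈ V := hLV hxL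
        have := Submodule.sub_mem _ h1 (hDV hd)
        simpa using this
      have hc0 : c' = 0 := Submodule.disjoint_def.1 hC.disjoint c' hcV hc'
      rw [hc0, add_zero] at hxL ⊢
      exact hDL d hd hxL
    · rw [codisjoint_iff, hMdef, ← sup_assoc, hLD_sup]
      exact hC.sup_eq_top
  set q : W →ₗ[ℝ] W := M.subtype ∘ₗ (Submodule.linearProjOfIsCompl M L hLM.symm) with hqdef
  have hq_fix : ∀ x ∈ M, q x = x := by
    intro x hx
    have h : (Submodule.linearProjOfIsCompl M L hLM.symm) x = ⟨x, hx⟩ :=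
      Submodule.linearProjOfIsCompl_apply_left hLM.symm ⟨x, hx⟩
    simp [hqdef, h]
  have hq_L : ∀ x ∈ L, q x = 0 := by
    intro x hx
    have h : (Submodule.linearProjOfIsCompl M L hLM.symm) x = 0 :=
      Submodule.linearProjOfIsCompl_apply_right' hLM.symm hx
    simp [hqdef, h]
  have hq_sub : ∀ x : W, x - q x ∈ L := by
    intro x
    have hx : x ∈ L ⊔ M := by rw [hLM.sup_eq_top]; trivial
    obtain ⟨l, hl, mm, hmm, rfl⟩ := Submodule.mem_sup.1 hx
    have h : q (l + mm) = mm := by rw [map_add, hq_L l hl, hq_fix mm hmm, zero_add]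
    rw [h, add_sub_cancel_right]
    exact hl
  have hq_V : ∀ x ∈ V, q x ∈ D := by
    intro x hx
    rw [← hLD_sup] at hx
    obtain ⟨l, hl, d, hd, rfl⟩ := Submodule.mem_sup.1 hx
    rw [map_add, hq_L l hl, zero_add, hq_fix d (Submodule.mem_sup_left hd)]
    exact hd
  have hq_E : ∀ x ∈ E, q x = x := fun x hx =>
    hq_fix x (Submodule.mem_sup_left (hED hx))
  set μ : W [⋀^Fin (r'+m)]→ₗ[ℝ] ℝ := (ω.curryLeft w).compLinearMap q with hμdef
  have hμ : ∀ x : Fin (r'+m) → W, μ x = ω (Fin.cons w (fun i => q (x i))) := fun x => rfl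
  have cond1 : ∀ (x : Fin (r'+m) → W) (i : Fin (r'+m)), x i ∈ L → μ x = 0 := by
    intro x i hxi
    rw [hμ]
    apply AlternatingMap.map_coord_zero (i := i.succ)
    rw [Fin.cons_succ]
    exact hq_L _ hxi
  have cond2 : ∀ (x : Fin (r'+m) → W) (I : Finset (Fin (r'+m))), I.card = r'+1 →
      (∀ i ∈ I, x i ∈ V) → μ x = 0 := by
    intro x I hIc hxV
    rw [hμ]
    apply hhor _ (insert (0 : Fin (r'+m+1)) (I.image Fin.succ))
    · rw [Finset.card_insert_of_notMem (by
        intro hmem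
        obtain ⟨i, _, hEq⟩ := Finset.mem_image.1 hmem
        exact Fin.succ_ne_zero i hEq),
        Finset.card_image_of_injective _ (Fin.succ_injective _), hIc]
    · intro i hi
      rcases Finset.mem_insert.1 hi with rfl | hi'
      · rw [Fin.cons_zero]; exact hwV
      · obtain ⟨i', hi'I, rfl⟩ := Finset.mem_image.1 hi'
        rw [Fin.cons_succ]
        exact hDV (hq_V _ (hxV i' hi'I))
  obtain ⟨v, hvL, hv⟩ := hml' μ cond1 cond2
  set w' : W := w - v with hw'def
  have hw'V : w' ∈ V := Submodule.sub_mem V hwV (hLV hvL)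
  have hw'EL : w' ∉ E ⊔ L := by
    intro h
    apply hwEL
    have hwe : w = w' + v := (sub_add_cancel w v).symm
    rw [hwe]
    exact Submodule.add_mem _ h (Submodule.mem_sup_right hvL)
  have key : ∀ (g : Fin (r'+m) → W) (J : Finset (Fin (r'+m))), J.card = r' →
      (∀ i ∈ J, g i ∈ E) → ω (Fin.cons w' g) = 0 := by
    intro g J hJc hgE
    set Y : Fin (r'+m+1) → W := Fin.cons w (fun i => q (g i)) with hYdef
    set Z : Fin (r'+m+1) → W := Fin.cons 0 (fun i => g i - q (g i)) with hZdef
    have hYZ : Y + Z = Fin.cons w g := by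
      funext i
      refine Fin.cases ?_ ?_ i
      · show Y 0 + Z 0 = w
        rw [hYdef, hZdef]; simp
      · intro i'
        show Y i'.succ + Z i'.succ = g i'
        rw [hYdef, hZdef]; simp
    have hcw : ω (Fin.cons w g) = ω Y := by
      rw [← hYZ]
      have expand : ω (Y + Z) = ∑ s : Finset (Fin (r'+m+1)), ω (s.piecewise Y Z) :=
        ω.toMultilinearMap.map_add_univ Y Z
      have hterms : ∀ s ∈ (Finset.univ : Finset (Finset (Fin (r'+m+1)))), s ≠ Finset.univ →
          ω (s.piecewise Y Z) = 0 := by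
        intro s _ hs
        by_cases h0 : (0 : Fin (r'+m+1)) ∈ s
        · obtain ⟨j, hjs⟩ : ∃ j, j ∉ s := by
            by_contra hall; push_neg at hall
            exact hs (Finset.eq_univ_iff_forall.2 hall)
          have hj0 : j ≠ 0 := fun h => hjs (h ▸ h0)
          obtain ⟨i₀, rfl⟩ := Fin.eq_succ_of_ne_zero hj0
          by_cases hi₀J : i₀ ∈ J
          · apply AlternatingMap.map_coord_zero (i := i₀.succ)
            rw [Finset.piecewise_eq_of_notMem _ _ _ hjs, hZdef, Fin.cons_succ,
              hq_E _ (hgE i₀ hi₀J), sub_self]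
          · by_cases hJs : ∀ i ∈ J, i.succ ∈ s
            · apply hhor _ (insert (0 : Fin (r'+m+1)) (insert i₀.succ (J.image Fin.succ)))
              · rw [Finset.card_insert_of_notMem, Finset.card_insert_of_notMem,
                  Finset.card_image_of_injective _ (Fin.succ_injective _), hJc]
                · intro hmem
                  obtain ⟨i, hiJ, hEq⟩ := Finset.mem_image.1 hmem
                  exact hi₀J (by rwa [Fin.succ_injective _ hEq] at hiJ)
                · intro hmem
                  rcases Finset.mem_insert.1 hmem with h | h
                  · exact Fin.succ_ne_zero i₀ h.symm
                  · obtain ⟨i, _, hEq⟩ := Finset.mem_image.1 h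
                    exact Fin.succ_ne_zero i hEq
              · intro i hi
                rcases Finset.mem_insert.1 hi with rfl | hi'
                · rw [Finset.piecewise_eq_of_mem _ _ _ h0, hYdef, Fin.cons_zero]
                  exact hwV
                rcases Finset.mem_insert.1 hi' with rfl | hi''
                · rw [Finset.piecewise_eq_of_notMem _ _ _ hjs, hZdef, Fin.cons_succ]
                  exact hLV (hq_sub (g i₀))
                · obtain ⟨i', hi'J, rfl⟩ := Finset.mem_image.1 hi''
                  rw [Finset.piecewise_eq_of_mem _ _ _ (hJs i' hi'J), hYdef, Fin.cons_succ,
                    hq_E _ (hgE i' hi'J)]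
                  exact hEV (hgE i' hi'J)
            · push_neg at hJs
              obtain ⟨i₁, hi₁J, hi₁s⟩ := hJs
              apply AlternatingMap.map_coord_zero (i := i₁.succ)
              rw [Finset.piecewise_eq_of_notMem _ _ _ hi₁s, hZdef, Fin.cons_succ,
                hq_E _ (hgE i₁ hi₁J), sub_self]
        · apply AlternatingMap.map_coord_zero (i := (0 : Fin (r'+m+1)))
          rw [Finset.piecewise_eq_of_notMem _ _ _ h0, hZdef, Fin.cons_zero]
      rw [expand, Finset.sum_eq_single_of_mem Finset.univ (Finset.mem_univ _) hterms,
        Finset.piecewise_univ]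
    have h1 : ω (Fin.cons v g) = ω Y := by
      rw [hv g, hμ g]
    have hsub : ω (Fin.cons (w - v) g) = ω (Fin.cons w g) - ω (Fin.cons v g) := by
      have h2 := ω.map_update_sub (Fin.cons w g) 0 w v
      rwa [Fin.update_cons_zero, Fin.update_cons_zero, Fin.update_cons_zero] at h2
    rw [hw'def, hsub, hcw, h1, sub_self]
  refine ⟨E ⊔ Submodule.span ℝ {w'}, ?_, ?_, ?_, ?_⟩
  · refine lt_of_le_of_ne le_sup_left ?_
    intro h
    have hmem : w' ∈ E ⊔ Submodule.span ℝ {w'} :=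
      Submodule.mem_sup_right (Submodule.mem_span_singleton_self w')
    rw [← h] at hmem
    exact hw'EL (Submodule.mem_sup_left hmem)
  · exact sup_le hEV (Submodule.span_le.2 (Set.singleton_subset_iff.2 hw'V))
  · exact disj_ext E L w' hEL hw'EL
  · exact fun x I hIc hxI => alt_ext ω E w' r' hiso (alt_key' ω E w' r' key) x I hIc hxI
end Aux4
section Aux5
variable {W : Type*} [AddCommGroup W] [Module ℝ W]

lemma phase2_step {r' m : ℕ} (ω : W [⋀^Fin (r'+m+1)]→ₗ[ℝ] ℝ) (V L : Submodule ℝ W)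
    (hml' : ∀ α : W [⋀^Fin (r'+m)]→ₗ[ℝ] ℝ,
      (∀ (x : Fin (r'+m) → W) (i : Fin (r'+m)), x i ∈ L → α x = 0) →
      (∀ (x : Fin (r'+m) → W) (I : Finset (Fin (r'+m))), I.card = r'+1 →
        (∀ i ∈ I, x i ∈ V) → α x = 0) →
      ∃ v ∈ L, ∀ x : Fin (r'+m) → W, ω (Fin.cons v x) = α x)
    (E : Submodule ℝ W) (hEsup : E ⊔ L = V)
    (hisoE : ∀ (x : Fin (r'+m+1) → W) (I : Finset (Fin (r'+m+1))), I.card = r'+1 →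
      (∀ i ∈ I, x i ∈ E) → ω x = 0)
    (F : Submodule ℝ W) (hEF : E ≤ F) (hFL : Disjoint F L)
    (hisoF : ∀ (x : Fin (r'+m+1) → W) (I : Finset (Fin (r'+m+1))), I.card = r'+m+1 →
      (∀ i ∈ I, x i ∈ F) → ω x = 0)
    (hne : F ⊔ L ≠ ⊤) :
    ∃ F' : Submodule ℝ W, F < F' ∧ E ≤ F' ∧ Disjoint F' L ∧
      ∀ (x : Fin (r'+m+1) → W) (I : Finset (Fin (r'+m+1))), I.card = r'+m+1 →
        (∀ i ∈ I, x i ∈ F') → ω x = 0 := by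
  classical
  obtain ⟨w, -, hwFL⟩ := SetLike.exists_of_lt (lt_top_iff_ne_top.mpr hne : F ⊔ L < ⊤)
  obtain ⟨C, hC⟩ := Submodule.exists_isCompl (F ⊔ L)
  set N : Submodule ℝ W := L ⊔ C with hNdef
  have hFN : IsCompl F N := by
    constructor
    · rw [Submodule.disjoint_def]
      intro x hxF hxN
      obtain ⟨l, hl, c', hc', rfl⟩ := Submodule.mem_sup.1 hxN
      have hcFL : c' ∈ F ⊔ L := by
        have h1 : l + c' ∈ F ⊔ L := Submodule.mem_sup_left hxF
        have h2 : l ∈ F ⊔ L := Submodule.mem_sup_right hl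
        have := Submodule.sub_mem _ h1 h2
        simpa using this
      have hc0 : c' = 0 := Submodule.disjoint_def.1 hC.disjoint c' hcFL hc'
      rw [hc0, add_zero] at hxF ⊢
      exact Submodule.disjoint_def.1 hFL l hxF hl
    · rw [codisjoint_iff, hNdef, ← sup_assoc]
      exact hC.sup_eq_top
  set p : W →ₗ[ℝ] W := F.subtype ∘ₗ (Submodule.linearProjOfIsCompl F N hFN) with hpdef
  have hp_F : ∀ x ∈ F, p x = x := by
    intro x hx
    have h : (Submodule.linearProjOfIsCompl F N hFN) x = ⟨x, hx⟩ :=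
      Submodule.linearProjOfIsCompl_apply_left hFN ⟨x, hx⟩
    simp [hpdef, h]
  have hp_L : ∀ x ∈ L, p x = 0 := by
    intro x hx
    have h : (Submodule.linearProjOfIsCompl F N hFN) x = 0 :=
      Submodule.linearProjOfIsCompl_apply_right' hFN (Submodule.mem_sup_left hx)
    simp [hpdef, h]
  have hp_V : ∀ x ∈ V, p x ∈ E := by
    intro x hx
    rw [← hEsup] at hx
    obtain ⟨e, he, l, hl, rfl⟩ := Submodule.mem_sup.1 hx
    rw [map_add, hp_L l hl, add_zero, hp_F e (hEF he)]
    exact he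
  set μ : W [⋀^Fin (r'+m)]→ₗ[ℝ] ℝ := (ω.curryLeft w).compLinearMap p with hμdef
  have hμ : ∀ x : Fin (r'+m) → W, μ x = ω (Fin.cons w (fun i => p (x i))) := fun x => rfl
  have cond1 : ∀ (x : Fin (r'+m) → W) (i : Fin (r'+m)), x i ∈ L → μ x = 0 := by
    intro x i hxi
    rw [hμ]
    apply AlternatingMap.map_coord_zero (i := i.succ)
    rw [Fin.cons_succ]
    exact hp_L _ hxi
  have cond2 : ∀ (x : Fin (r'+m) → W) (I : Finset (Fin (r'+m))), I.card = r'+1 →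
      (∀ i ∈ I, x i ∈ V) → μ x = 0 := by
    intro x I hIc hxV
    rw [hμ]
    apply hisoE _ (I.image Fin.succ)
    · rw [Finset.card_image_of_injective _ (Fin.succ_injective _), hIc]
    · intro i hi
      obtain ⟨i', hi'I, rfl⟩ := Finset.mem_image.1 hi
      rw [Fin.cons_succ]
      exact hp_V _ (hxV i' hi'I)
  obtain ⟨v, hvL, hv⟩ := hml' μ cond1 cond2
  set w' : W := w - v with hw'def
  have hw'FL : w' ∉ F ⊔ L := by
    intro h
    apply hwFL
    have hwe : w = w' + v := (sub_add_cancel w v).symm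
    rw [hwe]
    exact Submodule.add_mem _ h (Submodule.mem_sup_right hvL)
  have key : ∀ (g : Fin (r'+m) → W) (J : Finset (Fin (r'+m))), J.card = r'+m →
      (∀ i ∈ J, g i ∈ F) → ω (Fin.cons w' g) = 0 := by
    intro g J hJc hgF
    have hJuniv : J = Finset.univ := Finset.eq_univ_of_card J (hJc.trans (Fintype.card_fin _).symm)
    have hgF' : ∀ i, g i ∈ F := fun i => hgF i (hJuniv ▸ Finset.mem_univ i)
    have hpg : (fun i => p (g i)) = g := funext fun i => hp_F _ (hgF' i)
    have h1 : ω (Fin.cons v g) = ω (Fin.cons w g) := by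
      rw [hv g, hμ g, hpg]
    have hsub := ω.map_update_sub (Fin.cons w g) 0 w v
    rwa [Fin.update_cons_zero, Fin.update_cons_zero, Fin.update_cons_zero, h1, sub_self] at hsub
  refine ⟨F ⊔ Submodule.span ℝ {w'}, ?_, le_trans hEF le_sup_left,
    disj_ext F L w' hFL hw'FL, ?_⟩
  · refine lt_of_le_of_ne le_sup_left ?_
    intro h
    have hmem : w' ∈ F ⊔ Submodule.span ℝ {w'} :=
      Submodule.mem_sup_right (Submodule.mem_span_singleton_self w')
    rw [← h] at hmem
    exact hw'FL (Submodule.mem_sup_left hmem)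
  · exact fun x I hIc hxI =>
      alt_ext ω F w' (r'+m) hisoF (alt_key' ω F w' (r'+m) key) x I hIc hxI

lemma exists_maximal [FiniteDimensional ℝ W] (P : Submodule ℝ W → Prop)
    (S₀ : Submodule ℝ W) (h₀ : P S₀) : ∃ S, P S ∧ ∀ S', P S' → ¬ S < S' := by
  obtain ⟨S, hS, hmax⟩ := set_has_maximal_iff_noetherian.mpr inferInstance {S | P S} ⟨S₀, h₀⟩
  exact ⟨S, hS, fun S' h h' => hmax S' h h'⟩

end Aux5

/-- Existence of a `k`-isotropic complement of a multilagrangian subspace.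

Setting: `0 → V → W →π T → 0`, `ω` a multilagrangian `(k+1)`-form of horizontality
degree `m = k+1−r`, with `r = r'+1` and `k+1 = r'+m+1`, and multilagrangian subspace
`L ⊆ V`. Conclusion: there is a `k`-isotropic subspace `F` of `W` with `W = F ⊕ L`
such that `E = V ∩ F` is `(r−1)`-isotropic and `V = E ⊕ L`. -/
theorem stmt17 {W T : Type*} [AddCommGroup W] [Module ℝ W] [FiniteDimensional ℝ W]
    [AddCommGroup T] [Module ℝ T]
    (π : W →ₗ[ℝ] T) (hsurj : Function.Surjective π)
    (V : Submodule ℝ W) (hV : LinearMap.ker π = V)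
    {r' m n : ℕ} (hn : Module.finrank ℝ T = n) (hm : m ≤ n)
    (ω : W [⋀^Fin (r' + m + 1)]→ₗ[ℝ] ℝ) (hω : ω ≠ 0)
    (hhor : ∀ (x : Fin (r' + m + 1) → W) (I : Finset (Fin (r' + m + 1))),
      I.card = r' + 2 → (∀ i ∈ I, x i ∈ V) → ω x = 0)
    (L : Submodule ℝ W) (hLV : L ≤ V)
    (hml : ∀ α : W [⋀^Fin (r' + m)]→ₗ[ℝ] ℝ,
      (∃ v ∈ L, ∀ x : Fin (r' + m) → W, ω (Fin.cons v x) = α x)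
        ↔ ((∀ (x : Fin (r' + m) → W) (i : Fin (r' + m)), x i ∈ L → α x = 0)
            ∧ ∀ (x : Fin (r' + m) → W) (I : Finset (Fin (r' + m))),
                I.card = r' + 1 → (∀ i ∈ I, x i ∈ V) → α x = 0)) :
    ∃ F : Submodule ℝ W,
      (∀ x : Fin (r' + m + 1) → W, (∀ i, x i ∈ F) → ω x = 0)
        ∧ Disjoint F L ∧ F ⊔ L = ⊤
        ∧ (∀ x : Fin (r' + m + 1) → W,
            (∀ i : Fin (r' + m + 1), (i : ℕ) < r' + 1 → x i ∈ V ⊓ F) → ω x = 0)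
        ∧ Disjoint (V ⊓ F) L ∧ (V ⊓ F) ⊔ L = V := by
  classical
  have hml' : ∀ α : W [⋀^Fin (r'+m)]→ₗ[ℝ] ℝ,
      (∀ (x : Fin (r'+m) → W) (i : Fin (r'+m)), x i ∈ L → α x = 0) →
      (∀ (x : Fin (r'+m) → W) (I : Finset (Fin (r'+m))), I.card = r'+1 →
        (∀ i ∈ I, x i ∈ V) → α x = 0) →
      ∃ v ∈ L, ∀ x : Fin (r'+m) → W, ω (Fin.cons v x) = α x :=
    fun α h1 h2 => (hml α).2 ⟨h1, h2⟩
  -- Phase 1: an (r-1)-isotropic complement E of L in V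
  have hbot : ∀ (x : Fin (r'+m+1) → W) (I : Finset (Fin (r'+m+1))), I.card = r'+1 →
      (∀ i ∈ I, x i ∈ (⊥ : Submodule ℝ W)) → ω x = 0 := by
    intro x I hIc hx
    obtain ⟨i, hi⟩ := Finset.card_pos.1 (by rw [hIc]; omega)
    exact ω.map_coord_zero i ((Submodule.mem_bot ℝ).1 (hx i hi))
  obtain ⟨E, ⟨hEV, hEL, hisoE⟩, hEmax⟩ := exists_maximal
    (fun S => S ≤ V ∧ Disjoint S L ∧
      ∀ (x : Fin (r'+m+1) → W) (I : Finset (Fin (r'+m+1))), I.card = r'+1 →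
        (∀ i ∈ I, x i ∈ S) → ω x = 0)
    ⊥ ⟨bot_le, disjoint_bot_left, hbot⟩
  have hEsup : E ⊔ L = V := by
    by_contra hne
    obtain ⟨E', hlt, hE'V, hE'L, hiso'⟩ := phase1_step ω V L hhor hml' hLV E hEV hEL hisoE hne
    exact hEmax E' ⟨hE'V, hE'L, hiso'⟩ hlt
  -- Phase 2: a k-isotropic complement F of L in W containing E
  have hisoE_full : ∀ (x : Fin (r'+m+1) → W) (I : Finset (Fin (r'+m+1))),
      I.card = r'+m+1 → (∀ i ∈ I, x i ∈ E) → ω x = 0 := by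
    intro x I hIc hx
    obtain ⟨J, hJI, hJc⟩ := Finset.exists_subset_card_eq (show r'+1 ≤ I.card by omega)
    exact hisoE x J hJc (fun i hi => hx i (hJI hi))
  obtain ⟨F, ⟨hEF, hFL, hisoF⟩, hFmax⟩ := exists_maximal
    (fun S => E ≤ S ∧ Disjoint S L ∧
      ∀ (x : Fin (r'+m+1) → W) (I : Finset (Fin (r'+m+1))), I.card = r'+m+1 →
        (∀ i ∈ I, x i ∈ S) → ω x = 0)
    E ⟨le_refl E, hEL, hisoE_full⟩
  have hFsup : F ⊔ L = ⊤ := by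
    by_contra hne
    obtain ⟨F', hlt, hEF', hF'L, hiso'⟩ :=
      phase2_step ω V L hml' E hEsup hisoE F hEF hFL hisoF hne
    exact hFmax F' ⟨hEF', hF'L, hiso'⟩ hlt
  have hVF : V ⊓ F = E := by
    apply le_antisymm
    · intro x hx
      obtain ⟨hxV, hxF⟩ := hx
      rw [← hEsup] at hxV
      obtain ⟨e, he, l, hl, rfl⟩ := Submodule.mem_sup.1 hxV
      have hlF : l ∈ F := by
        have := Submodule.sub_mem _ hxF (hEF he)
        simpa using this
      have hl0 : l = 0 := Submodule.disjoint_def.1 hFL l hlF hl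
      rw [hl0, add_zero]
      exact he
    · exact le_inf hEV hEF
  refine ⟨F, ?_, hFL, hFsup, ?_, ?_, ?_⟩
  · intro x hx
    exact hisoF x Finset.univ (by simp) (fun i _ => hx i)
  · intro x hx
    apply hisoE x (Finset.image (Fin.castLE (by omega : r'+1 ≤ r'+m+1)) Finset.univ)
    · rw [Finset.card_image_of_injective _ (Fin.castLE_injective _), Finset.card_univ,
        Fintype.card_fin]
    · intro i hi
      obtain ⟨i', -, rfl⟩ := Finset.mem_image.1 hi
      have hlt : ((Fin.castLE (by omega : r'+1 ≤ r'+m+1) i' : Fin (r'+m+1)) : ℕ) < r'+1 := by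
        simpa using i'.isLt
      have hmem := hx _ hlt
      rwa [hVF] at hmem
  · exact hFL.mono_left inf_le_right
  · rw [hVF]; exact hEsup
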